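/- Let n = 2p^k where p is an odd prime and k ≥ 1. Then I_r(ℤ/nℤ) = D((ℤ/nℤ)^×) + (k - 1). -/

import Mathlib

/-- The Davenport constant of a (multiplicative) commutative group: the least `k > 0` such
that every sequence of `k` elements has a nonempty subsequence with product `1`. -/
noncomputable def Davenport (G : Type*) [CommGroup G] : ℕ :=
  sInf {k : ℕ | 0 < k ∧ ∀ f : Fin k → G,
    ∃ T : Finset (Fin k), T.Nonempty ∧ ∏ i ∈ T, f i = 1}

/-- The Erdős–Burgess constant of a commutative monoid: the least `t > 0` such that every
sequence of `t` elements has a nonempty subsequence whose product is idempotent. -/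
noncomputable def ErdosBurgess (M : Type*) [CommMonoid M] : ℕ :=
  sInf {t : ℕ | 0 < t ∧ ∀ f : Fin t → M,
    ∃ T : Finset (Fin t), T.Nonempty ∧ (∏ i ∈ T, f i) * (∏ i ∈ T, f i) = ∏ i ∈ T, f i}

open Finset

section Aux

def DavSet (G : Type*) [CommGroup G] : Set ℕ :=
  {k : ℕ | 0 < k ∧ ∀ f : Fin k → G,
    ∃ T : Finset (Fin k), T.Nonempty ∧ ∏ i ∈ T, f i = 1}

def EBSet (M : Type*) [CommMonoid M] : Set ℕ :=
  {t : ℕ | 0 < t ∧ ∀ f : Fin t → M,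
    ∃ T : Finset (Fin t), T.Nonempty ∧ (∏ i ∈ T, f i) * (∏ i ∈ T, f i) = ∏ i ∈ T, f i}

lemma dav_card_mem (G : Type*) [CommGroup G] [Fintype G] : Fintype.card G ∈ DavSet G := by
  set c := Fintype.card G with hc
  refine ⟨Fintype.card_pos, fun f => ?_⟩
  have key : ∀ a b : Fin (c+1), (a : ℕ) < (b : ℕ) →
      ∏ i ∈ univ.filter (fun i : Fin c => (i : ℕ) < (a : ℕ)), f i =
        ∏ i ∈ univ.filter (fun i : Fin c => (i : ℕ) < (b : ℕ)), f i →
      ∃ T : Finset (Fin c), T.Nonempty ∧ ∏ i ∈ T, f i = 1 := by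
    intro a b hlt hPab
    have hbc : (b : ℕ) ≤ c := Nat.lt_succ_iff.mp b.isLt
    refine ⟨univ.filter (fun i : Fin c => (a : ℕ) ≤ (i : ℕ) ∧ (i : ℕ) < (b : ℕ)), ?_, ?_⟩
    · refine ⟨⟨(a : ℕ), by omega⟩, ?_⟩
      simp only [mem_filter, mem_univ, true_and]
      exact ⟨le_refl _, hlt⟩
    · have hsplit : ∏ i ∈ univ.filter (fun i : Fin c => (i : ℕ) < (b : ℕ)), f i =
          (∏ i ∈ univ.filter (fun i : Fin c => (i : ℕ) < (a : ℕ)), f i) *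
          ∏ i ∈ univ.filter (fun i : Fin c => (a : ℕ) ≤ (i : ℕ) ∧ (i : ℕ) < (b : ℕ)), f i := by
        rw [← Finset.prod_filter_mul_prod_filter_not
          (univ.filter (fun i : Fin c => (i : ℕ) < (b : ℕ))) (fun i => (i : ℕ) < (a : ℕ))]
        congr 1
        · congr 1
          ext i
          simp only [mem_filter, mem_univ, true_and]
          omega
        · congr 1
          ext i
          simp only [mem_filter, mem_univ, true_and]
          omega
      have h2 : (∏ i ∈ univ.filter (fun i : Fin c => (i : ℕ) < (a : ℕ)), f i) * ∏ i ∈ univ.filter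
          (fun i : Fin c => (a : ℕ) ≤ (i : ℕ) ∧ (i : ℕ) < (b : ℕ)), f i =
          (∏ i ∈ univ.filter (fun i : Fin c => (i : ℕ) < (a : ℕ)), f i) * 1 := by
        rw [mul_one, ← hsplit, hPab]
      exact mul_left_cancel h2
  obtain ⟨a, b, hab, hPab⟩ := Fintype.exists_ne_map_eq_of_card_lt
    (fun j : Fin (c+1) => ∏ i ∈ univ.filter (fun i : Fin c => (i : ℕ) < (j : ℕ)), f i)
    (by simp [hc])
  rcases lt_or_gt_of_ne (fun h : (a : ℕ) = (b : ℕ) => hab (Fin.ext h)) with h | h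
  · exact key a b h hPab
  · exact key b a h hPab.symm

lemma dav_mem (G : Type*) [CommGroup G] [Fintype G] : Davenport G ∈ DavSet G :=
  Nat.sInf_mem ⟨_, dav_card_mem G⟩

lemma dav_pos (G : Type*) [CommGroup G] [Fintype G] : 0 < Davenport G := (dav_mem G).1

lemma eb_upward {M : Type*} [CommMonoid M] {t t' : ℕ} (h : t ≤ t') (ht : t ∈ EBSet M) :
    t' ∈ EBSet M := by
  obtain ⟨hpos, hall⟩ := ht
  refine ⟨lt_of_lt_of_le hpos h, fun f => ?_⟩
  obtain ⟨T, hT, hTp⟩ := hall (fun j => f (Fin.castLE h j))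
  refine ⟨T.map (Fin.castLEEmb h), hT.map, ?_⟩
  rw [Finset.prod_map]
  exact hTp

lemma dav_counterexample (G : Type*) [CommGroup G] [Fintype G] :
    ∃ f : Fin (Davenport G - 1) → G,
      ∀ T : Finset (Fin (Davenport G - 1)), T.Nonempty → ∏ i ∈ T, f i ≠ 1 := by
  rcases Nat.eq_zero_or_pos (Davenport G - 1) with h0 | hpos
  · refine ⟨fun _ => 1, fun T hT => absurd hT ?_⟩
    rintro ⟨i, -⟩
    rw [h0] at i
    exact i.elim0
  · have hnot : (Davenport G - 1) ∉ DavSet G := by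
      apply Nat.notMem_of_lt_sInf
      have := dav_pos G
      show Davenport G - 1 < Davenport G
      omega
    rw [DavSet, Set.mem_setOf_eq, not_and] at hnot
    have := hnot hpos
    push_neg at this
    obtain ⟨f, hf⟩ := this
    exact ⟨f, hf⟩

end Aux

theorem stmt11 (p k : ℕ) (hp : p.Prime) (hodd : Odd p) (hk : 0 < k) :
    ErdosBurgess (ZMod (2 * p ^ k)) = Davenport ((ZMod (2 * p ^ k))ˣ) + (k - 1) := by
  have hp1 : 1 < p := hp.one_lt
  have hpk : 0 < p ^ k := pow_pos hp.pos k
  haveI : NeZero (2 * p ^ k) := ⟨by positivity⟩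
  haveI : NeZero (p ^ k) := ⟨by positivity⟩
  set n := 2 * p ^ k with hn
  set D := Davenport ((ZMod n)ˣ) with hD
  have hDpos : 0 < D := dav_pos _
  have h2dvd : 2 ∣ n := ⟨p ^ k, rfl⟩
  have hpkdvd : p ^ k ∣ n := ⟨2, by ring⟩
  set φ2 : ZMod n →+* ZMod 2 := ZMod.castHom h2dvd (ZMod 2) with hφ2
  set φp : ZMod n →+* ZMod (p ^ k) := ZMod.castHom hpkdvd (ZMod (p ^ k)) with hφp
  have hcop : Nat.Coprime 2 (p ^ k) := (Nat.coprime_two_left.mpr hodd).pow_right k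
  have hinj : ∀ x y : ZMod n, φ2 x = φ2 y → φp x = φp y → x = y := by
    intro x y h2 hpp
    have hd2 : φ2 (x - y) = 0 := by rw [map_sub, h2, sub_self]
    have hdp : φp (x - y) = 0 := by rw [map_sub, hpp, sub_self]
    set d := x - y with hdd
    have hval : ((d.val : ℕ) : ZMod n) = d := ZMod.natCast_rightInverse d
    have h2' : ((d.val : ℕ) : ZMod 2) = 0 := by
      rw [← map_natCast φ2 d.val, hval, hd2]
    have hp' : ((d.val : ℕ) : ZMod (p ^ k)) = 0 := by
      rw [← map_natCast φp d.val, hval, hdp]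
    have h2dvdv : 2 ∣ d.val := (ZMod.natCast_eq_zero_iff _ _).mp h2'
    have hpdvdv : p ^ k ∣ d.val := (ZMod.natCast_eq_zero_iff _ _).mp hp'
    have hndvd : n ∣ d.val := Nat.Coprime.mul_dvd_of_dvd_of_dvd hcop h2dvdv hpdvdv
    have hv0 : d.val = 0 := by
      by_contra hne
      exact absurd (ZMod.val_lt d) (not_lt.mpr (Nat.le_of_dvd (Nat.pos_of_ne_zero hne) hndvd))
    have hd0 : d = 0 := by rw [← hval, hv0, Nat.cast_zero]
    exact sub_eq_zero.mp (hdd ▸ hd0)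
  have hz2 : ∀ z : ZMod 2, z * z = z := by decide
  have hidem : ∀ x : ZMod n, φp x * φp x = φp x → x * x = x := by
    intro x hx
    apply hinj
    · rw [map_mul]; exact hz2 _
    · rw [map_mul]; exact hx
  have hlift : ∀ x : ZMod n, IsUnit (φp x) → ∃ u : (ZMod n)ˣ, φp (u : ZMod n) = φp x := by
    intro x hx
    have hpk2 : ((p ^ k : ℕ) : ZMod 2) = 1 := by
      have hmod : p ^ k % 2 = 1 := Nat.odd_iff.mp hodd.pow
      rw [← ZMod.natCast_mod, hmod, Nat.cast_one]
    have hpkp : ((p ^ k : ℕ) : ZMod (p ^ k)) = 0 := ZMod.natCast_self _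
    have h01 : ∀ z : ZMod 2, z = 0 ∨ z = 1 := by decide
    set w : ZMod n := if φ2 x = 1 then x else x + ((p ^ k : ℕ) : ZMod n) with hw
    have hw2 : φ2 w = 1 := by
      by_cases h : φ2 x = 1
      · rw [hw, if_pos h, h]
      · rcases h01 (φ2 x) with h0 | h1
        · rw [hw, if_neg h, map_add, map_natCast, h0, hpk2, zero_add]
        · exact absurd h1 h
    have hwp : φp w = φp x := by
      by_cases h : φ2 x = 1
      · rw [hw, if_pos h]
      · rw [hw, if_neg h, map_add, map_natCast, hpkp, add_zero]
    have hwval : ((w.val : ℕ) : ZMod n) = w := ZMod.natCast_rightInverse w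
    have hw2' : ((w.val : ℕ) : ZMod 2) = 1 := by rw [← map_natCast φ2, hwval, hw2]
    have hwp' : IsUnit ((w.val : ℕ) : ZMod (p ^ k)) := by
      rw [← map_natCast φp, hwval, hwp]; exact hx
    have hcop2 : Nat.Coprime w.val 2 := by
      rw [Nat.coprime_two_right, Nat.odd_iff]
      have h12 : ((w.val % 2 : ℕ) : ZMod 2) = 1 := by rw [ZMod.natCast_mod]; exact hw2'
      rcases Nat.mod_two_eq_zero_or_one w.val with h | h
      · rw [h] at h12; simp at h12
      · exact h
    have hcopp : Nat.Coprime w.val (p ^ k) := (ZMod.isUnit_iff_coprime _ _).mp hwp'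
    have hwunit : IsUnit w := by
      rw [← hwval, ZMod.isUnit_iff_coprime]
      exact Nat.Coprime.mul_right hcop2 hcopp
    exact ⟨hwunit.unit, by rw [IsUnit.unit_spec, hwp]⟩
  have hnonunit : ∀ x : ZMod (p ^ k), ¬ IsUnit x →
      ∃ y : ZMod (p ^ k), x = (p : ZMod (p ^ k)) * y := by
    intro x hx
    have hxval : ((x.val : ℕ) : ZMod (p ^ k)) = x := ZMod.natCast_rightInverse x
    by_cases hdvd : p ∣ x.val
    · obtain ⟨t, ht⟩ := hdvd
      exact ⟨(t : ZMod (p ^ k)), by rw [← hxval, ht]; push_cast; ring⟩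
    · exfalso
      apply hx
      rw [← hxval, ZMod.isUnit_iff_coprime]
      exact Nat.Coprime.pow_right k (hp.coprime_iff_not_dvd.mpr hdvd).symm
  -- UPPER BOUND
  have hub : D + (k - 1) ∈ EBSet (ZMod n) := by
    refine ⟨by omega, fun f => ?_⟩
    classical
    set sN : Finset (Fin (D + (k - 1))) := univ.filter (fun i => ¬ IsUnit (φp (f i))) with hsN
    by_cases hNk : k ≤ sN.card
    · obtain ⟨s', hs'sub, hs'card⟩ := Finset.exists_subset_card_eq hNk
      refine ⟨s', Finset.card_pos.mp (by omega), ?_⟩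
      apply hidem
      have hy : ∀ i ∈ s', ∃ y : ZMod (p ^ k), φp (f i) = (p : ZMod (p ^ k)) * y := by
        intro i hi
        exact hnonunit _ (Finset.mem_filter.mp (hs'sub hi)).2
      choose! y hy using hy
      have hprod : φp (∏ i ∈ s', f i) = 0 := by
        rw [map_prod, Finset.prod_congr rfl hy, Finset.prod_mul_distrib, Finset.prod_const,
          hs'card]
        have hpk0 : (p : ZMod (p ^ k)) ^ k = 0 := by
          rw [← Nat.cast_pow, ZMod.natCast_self]
        rw [hpk0, zero_mul]
      rw [hprod]
      simp
    · push_neg at hNk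
      set sU : Finset (Fin (D + (k - 1))) := univ.filter (fun i => IsUnit (φp (f i))) with hsU
      have hcards : sU.card + sN.card = D + (k - 1) := by
        have h1 := Finset.card_filter_add_card_filter_not
          (s := (univ : Finset (Fin (D + (k - 1))))) (fun i => IsUnit (φp (f i)))
        simpa using h1
      have hUD : D ≤ sU.card := by omega
      obtain ⟨s', hs'sub, hs'card⟩ := Finset.exists_subset_card_eq hUD
      set ε : Fin D ≃ s' := (Finset.equivFinOfCardEq hs'card).symm with hε
      have hunit : ∀ j : Fin D, IsUnit (φp (f ((ε j : s') : Fin (D + (k - 1))))) := by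
        intro j
        exact (Finset.mem_filter.mp (hs'sub (ε j).2)).2
      have hex : ∀ j : Fin D, ∃ u : (ZMod n)ˣ,
          φp (u : ZMod n) = φp (f ((ε j : s') : Fin (D + (k - 1)))) :=
        fun j => hlift _ (hunit j)
      choose u hu using hex
      obtain ⟨T', hT'ne, hT'prod⟩ := (dav_mem ((ZMod n)ˣ)).2 u
      set ι : Fin D → Fin (D + (k - 1)) := fun j => ((ε j : s') : Fin (D + (k - 1))) with hι
      have hιinj : Function.Injective ι := fun a b hab => ε.injective (Subtype.ext hab)
      refine ⟨T'.image ι, hT'ne.image ι, ?_⟩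
      apply hidem
      have hprod : φp (∏ i ∈ T'.image ι, f i) = 1 := by
        rw [map_prod, Finset.prod_image (fun a _ b _ h => hιinj h)]
        rw [Finset.prod_congr rfl (fun j _ => (hu j).symm)]
        have hcoe : ∏ j ∈ T', ((u j : ZMod n)) = ((∏ j ∈ T', u j : (ZMod n)ˣ) : ZMod n) :=
          (map_prod (Units.coeHom (ZMod n)) u T').symm
        calc ∏ j ∈ T', φp ((u j : ZMod n)) = φp (∏ j ∈ T', ((u j : ZMod n))) :=
              (map_prod φp _ T').symm
          _ = 1 := by rw [hcoe, hT'prod, Units.val_one, map_one]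
      rw [hprod, mul_one]
  -- LOWER BOUND
  have hlb : (D - 1) + (k - 1) ∉ EBSet (ZMod n) := by
    classical
    obtain ⟨f, hf⟩ := dav_counterexample ((ZMod n)ˣ)
    rintro ⟨-, hall⟩
    set L := (D - 1) + (k - 1) with hL
    set g : Fin L → ZMod n := fun i =>
      if h : (i : ℕ) < D - 1 then ((f ⟨i, h⟩ : (ZMod n)ˣ) : ZMod n) else (p : ZMod n) with hg
    obtain ⟨T, hTne, hTidem⟩ := hall g
    set T1 : Finset (Fin L) := T.filter (fun i => (i : ℕ) < D - 1) with hT1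
    set T2 : Finset (Fin L) := T.filter (fun i => ¬ (i : ℕ) < D - 1) with hT2
    set m := T2.card with hm
    have hmle : m ≤ k - 1 := by
      have hcard : m ≤ (Finset.range (k - 1)).card := by
        rw [hm]
        refine Finset.card_le_card_of_injOn (fun i => (i : ℕ) - (D - 1)) ?_ ?_
        · intro i hi
          have h1 : ¬ (i : ℕ) < D - 1 := by
            rw [hT2] at hi; exact (Finset.mem_filter.mp hi).2
          have h2 : (i : ℕ) < L := i.isLt
          simp only [Finset.mem_coe, Finset.mem_range]
          omega
        · intro i hi j hj hij
          have h1 : ¬ (i : ℕ) < D - 1 := by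
            rw [hT2] at hi; exact (Finset.mem_filter.mp hi).2
          have h2 : ¬ (j : ℕ) < D - 1 := by
            rw [hT2] at hj; exact (Finset.mem_filter.mp hj).2
          simp only at hij
          exact Fin.ext (by omega)
      simpa using hcard
    -- the unit part
    set e : {i : Fin L // i ∈ T1} → Fin (D - 1) := fun i =>
      ⟨(i.1 : ℕ), by have := Finset.mem_filter.mp i.2; exact this.2⟩ with he
    have heinj : Function.Injective e := by
      intro a b hab
      rw [he] at hab
      simp only [Fin.mk.injEq] at hab
      exact Subtype.ext (Fin.ext hab)
    set S : Finset (Fin (D - 1)) := T1.attach.image e with hS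
    set U : (ZMod n)ˣ := ∏ j ∈ S, f j with hU
    have hT1prod : ∏ i ∈ T1, g i = (U : ZMod n) := by
      rw [← Finset.prod_attach T1 g]
      have hstep : ∀ i ∈ T1.attach, g i.1 = ((f (e i) : (ZMod n)ˣ) : ZMod n) := by
        intro i _
        have hlt : (i.1 : ℕ) < D - 1 := (Finset.mem_filter.mp i.2).2
        rw [hg]
        simp only [dif_pos hlt]
        rfl
      rw [Finset.prod_congr rfl hstep, hU]
      rw [show ((∏ j ∈ S, f j : (ZMod n)ˣ) : ZMod n) = ∏ j ∈ S, ((f j : (ZMod n)ˣ) : ZMod n)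
        from map_prod (Units.coeHom (ZMod n)) f S]
      rw [hS, Finset.prod_image (fun a _ b _ h => heinj h)]
    have hT2prod : ∏ i ∈ T2, g i = (p : ZMod n) ^ m := by
      rw [← Finset.prod_const]
      apply Finset.prod_congr rfl
      intro i hi
      have hge : ¬ (i : ℕ) < D - 1 := by
        rw [hT2] at hi; exact (Finset.mem_filter.mp hi).2
      rw [hg]
      simp only [dif_neg hge]
    have hTprod : ∏ i ∈ T, g i = (U : ZMod n) * (p : ZMod n) ^ m := by
      rw [← Finset.prod_filter_mul_prod_filter_not T (fun i => (i : ℕ) < D - 1), ← hT1, ← hT2,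
        hT1prod, hT2prod]
    rcases Nat.eq_zero_or_pos m with hm0 | hmpos
    · -- all elements from the unit part; contradiction with hf
      have hT2e : T2 = ∅ := Finset.card_eq_zero.mp hm0
      have hT1T : T1 = T := by
        rw [hT1]
        apply Finset.filter_true_of_mem
        intro i hi
        by_contra hge
        have : i ∈ T2 := by rw [hT2]; exact Finset.mem_filter.mpr ⟨hi, hge⟩
        rw [hT2e] at this
        exact absurd this (Finset.notMem_empty i)
      have hSne : S.Nonempty := by
        rw [hS]
        apply Finset.Nonempty.image
        rw [Finset.attach_nonempty_iff, hT1T]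
        exact hTne
      have hUU : (U : ZMod n) * (U : ZMod n) = (U : ZMod n) := by
        rw [hm0, pow_zero, mul_one] at hTprod
        rw [← hTprod]
        exact hTidem
      have : U * U = U := Units.ext hUU
      have hU1 : U = 1 := by
        have h1 : U * U = U * 1 := by rw [this, mul_one]
        exact mul_left_cancel h1
      exact hf S hSne hU1
    · -- m ≥ 1 : contradiction via casting to ZMod p^(m+1)
      have hm1k : m + 1 ≤ k := by omega
      have hdvd1 : p ^ (m + 1) ∣ n := dvd_trans (pow_dvd_pow p hm1k) hpkdvd
      set ψ : ZMod n →+* ZMod (p ^ (m + 1)) := ZMod.castHom hdvd1 _ with hψ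
      rw [hTprod] at hTidem
      have hcancel : (U : ZMod n) * ((p : ZMod n) ^ m * (p : ZMod n) ^ m) = (p : ZMod n) ^ m := by
        have h1 : (U : ZMod n) * ((U : ZMod n) * ((p : ZMod n) ^ m * (p : ZMod n) ^ m)) =
            (U : ZMod n) * ((p : ZMod n) ^ m) := by
          rw [← hTidem]; ring
        exact (Units.mul_right_inj U).mp h1
      have hψeq := congrArg ψ hcancel
      simp only [map_mul, map_pow, map_natCast] at hψeq
      have hzero : (p : ZMod (p ^ (m + 1))) ^ m * (p : ZMod (p ^ (m + 1))) ^ m = 0 := by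
        rw [← pow_add, ← Nat.cast_pow]
        rw [ZMod.natCast_eq_zero_iff]
        exact pow_dvd_pow p (by omega)
      rw [hzero, mul_zero] at hψeq
      have : ((p ^ m : ℕ) : ZMod (p ^ (m + 1))) = 0 := by
        rw [Nat.cast_pow]; exact hψeq.symm
      rw [ZMod.natCast_eq_zero_iff] at this
      have hle := Nat.le_of_dvd (by positivity) this
      have hlt : p ^ m < p ^ (m + 1) := Nat.pow_lt_pow_right hp1 (Nat.lt_succ_self m)
      omega
  -- ASSEMBLY
  show sInf (EBSet (ZMod n)) = D + (k - 1)
  apply le_antisymm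
  · exact Nat.sInf_le hub
  · apply le_csInf ⟨_, hub⟩
    intro t htmem
    by_contra hlt
    push_neg at hlt
    have : (D - 1) + (k - 1) ∈ EBSet (ZMod n) := eb_upward (by omega) htmem
    exact hlb this
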